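/- Under the same ODE system, if y(t) > 0 for all t, then b(t) = (2/y(t))·∫₀ᵗ y(s)² ds for all t ≥ 0. -/

import Mathlib

/-- If `y' = αyz`, `b' = 2y - αbz`, `b(0) = 0`, and `y > 0`, then
`b(t) = (2/y(t)) ∫₀ᵗ y(s)² ds` for all `t ≥ 0`. -/
theorem b_integral_formula (α : ℝ) (y z b : ℝ → ℝ)
    (hy : ∀ t, HasDerivAt y (α * y t * z t) t)
    (hb : ∀ t, HasDerivAt b (2 * y t - α * b t * z t) t)
    (hb0 : b 0 = 0) (hypos : ∀ t, 0 < y t) :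
    ∀ t ≥ (0 : ℝ), b t = (2 / y t) * ∫ s in (0 : ℝ)..t, (y s) ^ 2 := by
  intro t ht
  have hg : ∀ s, HasDerivAt (fun u => b u * y u) (2 * y s ^ 2) s := by
    intro s
    have : HasDerivAt (fun u => b u * y u) _ s := (hb s).mul (hy s)
    convert this using 1
    ring
  have hycont : Continuous y := continuous_iff_continuousAt.mpr fun s => (hy s).continuousAt
  have hint : (∫ s in (0:ℝ)..t, 2 * y s ^ 2) = b t * y t - b 0 * y 0 := by
    apply intervalIntegral.integral_eq_sub_of_hasDerivAt (fun s _ => hg s)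
    exact (continuous_const.mul (hycont.pow 2)).intervalIntegrable 0 t
  rw [hb0, zero_mul, sub_zero] at hint
  rw [intervalIntegral.integral_const_mul] at hint
  have hyt := hypos t
  field_simp
  linarith [hint]
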